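/- For x ∈ ℝ⁶, one has x ≠ 0 and Q(x) = 0 if and only if there exist linearly independent vectors v, w ∈ ℂ⁴ with (v|v) = (w|w) = (v|w) = 0 such that Σ(x) = v wᵀ − w vᵀ (i.e., the bivector Σ(x) is decomposable as v ∧ w with v, w isotropic and mutually orthogonal). This establishes the bijective correspondence between generators of the null cone Q(x) = 0 in ℝ^{4,2} and maximal totally isotropic subspaces of ℂ^{2,2}. -/

import Mathlib

open Matrix Complex

/-- The six antilinear-Clifford matrices Γ₁,…,Γ₆ (indexed 0,…,5). -/
noncomputable def Gam : Fin 6 → Matrix (Fin 4) (Fin 4) ℂ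
  | 0 => !![0, 0, I, 0; 0, 0, 0, -I; I, 0, 0, 0; 0, -I, 0, 0]
  | 1 => !![0, 0, 1, 0; 0, 0, 0, 1; 1, 0, 0, 0; 0, 1, 0, 0]
  | 2 => !![0, 0, 0, -I; 0, 0, -I, 0; 0, -I, 0, 0; -I, 0, 0, 0]
  | 3 => !![0, I, 0, 0; -I, 0, 0, 0; 0, 0, 0, I; 0, 0, -I, 0]
  | 4 => !![0, 0, 0, -1; 0, 0, 1, 0; 0, 1, 0, 0; -1, 0, 0, 0]
  | 5 => !![0, 1, 0, 0; -1, 0, 0, 0; 0, 0, 0, -1; 0, 0, 1, 0]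

/-- X(x) = Σ x^α Γ_α. -/
noncomputable def Xm (x : Fin 6 → ℝ) : Matrix (Fin 4) (Fin 4) ℂ :=
  ∑ α : Fin 6, (x α : ℂ) • Gam α

/-- The quadratic form of signature (4,2). -/
def Qform (x : Fin 6 → ℝ) : ℝ :=
  x 0 ^ 2 + x 1 ^ 2 + x 2 ^ 2 - x 3 ^ 2 + x 4 ^ 2 - x 5 ^ 2

/-- The bilinear form of signature (4,2). -/
def Qbil (x y : Fin 6 → ℝ) : ℝ :=
  x 0 * y 0 + x 1 * y 1 + x 2 * y 2 - x 3 * y 3 + x 4 * y 4 - x 5 * y 5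

/-- G = diag(1,1,-1,-1) as a function. -/
def Gv : Fin 4 → ℝ := ![1, 1, -1, -1]

/-- The pseudo-Hermitian form of signature (2,2) on ℂ⁴. -/
def herm (u v : Fin 4 → ℂ) : ℂ :=
  u 0 * starRingEnd ℂ (v 0) + u 1 * starRingEnd ℂ (v 1)
    - u 2 * starRingEnd ℂ (v 2) - u 3 * starRingEnd ℂ (v 3)

/-- The Levi-Civita symbol on four indices, ε^{0123} = 1. -/
noncomputable def eps (i j k l : Fin 4) : ℝ :=
  (((j : ℕ) : ℝ) - ((i : ℕ) : ℝ)) * (((k : ℕ) : ℝ) - ((i : ℕ) : ℝ)) *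
    (((l : ℕ) : ℝ) - ((i : ℕ) : ℝ)) * (((k : ℕ) : ℝ) - ((j : ℕ) : ℝ)) *
    (((l : ℕ) : ℝ) - ((j : ℕ) : ℝ)) * (((l : ℕ) : ℝ) - ((k : ℕ) : ℝ)) / 12

/-- The six antisymmetric matrices Σ₁,…,Σ₆ (indexed 0,…,5). -/
noncomputable def Sig : Fin 6 → Matrix (Fin 4) (Fin 4) ℂ
  | 0 => !![0, 0, -I, 0; 0, 0, 0, I; I, 0, 0, 0; 0, -I, 0, 0]
  | 1 => !![0, 0, -1, 0; 0, 0, 0, -1; 1, 0, 0, 0; 0, 1, 0, 0]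
  | 2 => !![0, 0, 0, I; 0, 0, I, 0; 0, -I, 0, 0; -I, 0, 0, 0]
  | 3 => !![0, I, 0, 0; -I, 0, 0, 0; 0, 0, 0, -I; 0, 0, I, 0]
  | 4 => !![0, 0, 0, 1; 0, 0, -1, 0; 0, 1, 0, 0; -1, 0, 0, 0]
  | 5 => !![0, 1, 0, 0; -1, 0, 0, 0; 0, 0, 0, 1; 0, 0, -1, 0]

/-- Σ(x) = Σ x^α Σ_α. -/
noncomputable def Sm (x : Fin 6 → ℝ) : Matrix (Fin 4) (Fin 4) ℂ :=
  ∑ α : Fin 6, (x α : ℂ) • Sig α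

/-- The antilinear Hodge star on antisymmetric 4×4 complex matrices. -/
noncomputable def hstar (A : Matrix (Fin 4) (Fin 4) ℂ) : Matrix (Fin 4) (Fin 4) ℂ :=
  Matrix.of fun i j =>
    (1 / 2 : ℂ) * ∑ k : Fin 4, ∑ l : Fin 4,
      ((eps i j k l : ℝ) : ℂ) * ((Gv k : ℝ) : ℂ) * ((Gv l : ℝ) : ℂ) * starRingEnd ℂ (A k l)

private lemma Sm_eq (x : Fin 6 → ℝ) : Sm x =
    !![0, (x 3)*I + x 5, -(x 0)*I - x 1, (x 2)*I + x 4;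
       -(x 3)*I - x 5, 0, (x 2)*I - x 4, (x 0)*I - x 1;
       (x 0)*I + x 1, -(x 2)*I + x 4, 0, -(x 3)*I + x 5;
       -(x 2)*I - x 4, -(x 0)*I + x 1, (x 3)*I - x 5, 0] := by
  have h : ∀ i j, Sm x i j = (x 0 : ℂ) * Sig 0 i j + (x 1 : ℂ) * Sig 1 i j
      + (x 2 : ℂ) * Sig 2 i j + (x 3 : ℂ) * Sig 3 i j + (x 4 : ℂ) * Sig 4 i j
      + (x 5 : ℂ) * Sig 5 i j := by
    intro i j
    simp [Sm, Fin.sum_univ_six, Matrix.add_apply, Matrix.smul_apply, smul_eq_mul]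
  ext i j
  rw [h]
  fin_cases i <;> fin_cases j <;>
    · simp only [Sig]
      norm_num [Matrix.cons_val', Matrix.cons_val_zero, Matrix.cons_val_one,
        Matrix.head_cons, Matrix.empty_val', Matrix.cons_val_fin_one, Matrix.head_fin_const,
        Matrix.cons_val_two, Matrix.cons_val_three, Matrix.tail_cons]
      try ring_nf

set_option maxHeartbeats 2000000 in
/-- x ≠ 0 and Q(x) = 0 if and only if the bivector Σ(x) is decomposable as v ∧ w with v, w
linearly independent, isotropic and mutually orthogonal for the (2,2) pseudo-Hermitian form:
the bijective correspondence between generators of the null cone in ℝ^{4,2} and maximal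
totally isotropic subspaces of ℂ^{2,2}. -/
theorem null_cone_iff_decomposable :
    ∀ x : Fin 6 → ℝ,
      (x ≠ 0 ∧ Qform x = 0) ↔
        ∃ v w : Fin 4 → ℂ,
          LinearIndependent ℂ ![v, w] ∧
          herm v v = 0 ∧ herm w w = 0 ∧ herm v w = 0 ∧
          Sm x = Matrix.of (fun i j => v i * w j - w i * v j) := by
  intro x
  constructor
  · rintro ⟨hx0, hQ⟩
    rw [Qform] at hQ
    have hkey : ((x 1 : ℂ) + x 0 * I) * ((x 1 : ℂ) - x 0 * I)
        + ((x 4 : ℂ) + x 2 * I) * ((x 4 : ℂ) - x 2 * I)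
        = ((x 5 : ℂ) + x 3 * I) * ((x 5 : ℂ) - x 3 * I) := by
      have h0 : ((x 0 ^ 2 + x 1 ^ 2 + x 2 ^ 2 - x 3 ^ 2 + x 4 ^ 2 - x 5 ^ 2 : ℝ) : ℂ) = 0 := by
        rw [hQ]; simp
      push_cast at h0
      linear_combination h0 - ((x 0 : ℂ)^2 + (x 2 : ℂ)^2 - (x 3 : ℂ)^2) * Complex.I_sq
    have ha : ((x 5 : ℂ) + x 3 * I) ≠ 0 := by
      intro h
      rw [Complex.ext_iff] at h
      simp at h
      obtain ⟨h5, h3⟩ := h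
      apply hx0
      funext i
      fin_cases i <;> simp <;>
        nlinarith [sq_nonneg (x 0), sq_nonneg (x 1), sq_nonneg (x 2), sq_nonneg (x 4)]
    have ha' : ((x 5 : ℂ) - x 3 * I) ≠ 0 := by
      intro h
      rw [Complex.ext_iff] at h
      simp at h
      obtain ⟨h5, h3⟩ := h
      apply hx0
      funext i
      fin_cases i <;> simp <;>
        nlinarith [sq_nonneg (x 0), sq_nonneg (x 1), sq_nonneg (x 2), sq_nonneg (x 4)]
    refine ⟨![0, -((x 5:ℂ) + x 3*I), (x 1:ℂ) + x 0*I, -((x 4:ℂ) + x 2*I)],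
      ![1, 0, ((x 4:ℂ) - x 2*I)/((x 5:ℂ)+x 3*I), ((x 1:ℂ) - x 0*I)/((x 5:ℂ)+x 3*I)],
      ?_, ?_, ?_, ?_, ?_⟩
    · rw [LinearIndependent.pair_iff]
      intro s t hst
      have h0 := congrFun hst 0
      have h1 := congrFun hst 1
      simp at h0 h1
      rcases h1 with h1 | h1
      · exact ⟨h1, by simpa [h1] using h0⟩
      · exfalso; apply ha; linear_combination -h1
    · simp only [herm, Matrix.cons_val_zero, Matrix.cons_val_one, Matrix.head_cons,
        Matrix.cons_val_two, Matrix.cons_val_three, Matrix.tail_cons]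
      simp only [_root_.map_add, _root_.map_sub, _root_.map_mul, map_neg,
        Complex.conj_ofReal, Complex.conj_I]
      linear_combination -hkey
    · have hconj : (starRingEnd ℂ) ((x 5:ℂ) + x 3*I) ≠ 0 := by
        intro h; apply ha; simpa using congrArg (starRingEnd ℂ) h
      simp only [herm, Matrix.cons_val_zero, Matrix.cons_val_one, Matrix.head_cons,
        Matrix.cons_val_two, Matrix.cons_val_three, Matrix.tail_cons, map_div₀, _root_.map_one]
      field_simp
      have hD' : ((x 5:ℂ)+x 3*I) * ((x 5:ℂ) + -(x 3*I)) ≠ 0 :=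
        mul_ne_zero ha (by simpa [sub_eq_add_neg] using ha')
      simp only [_root_.map_add, _root_.map_sub, _root_.map_mul, map_neg, map_zero,
        Complex.conj_ofReal, Complex.conj_I, mul_zero, add_zero]
      rw [sub_sub, ← add_div, sub_eq_zero, eq_comm, div_eq_iff (by convert hD' using 1 <;> ring)]
      linear_combination hkey
    · simp only [herm, Matrix.cons_val_zero, Matrix.cons_val_one, Matrix.head_cons,
        Matrix.cons_val_two, Matrix.cons_val_three, Matrix.tail_cons, map_div₀,
        _root_.map_one, map_zero]
      simp only [_root_.map_add, _root_.map_sub, _root_.map_mul, map_neg,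
        Complex.conj_ofReal, Complex.conj_I]
      field_simp
      ring
    · rw [Sm_eq]
      have ha2 : (x 5:ℂ) + I * x 3 ≠ 0 := by rwa [mul_comm I]
      ext i j
      fin_cases i <;> fin_cases j <;>
        simp only [Matrix.of_apply, Matrix.cons_val', Matrix.cons_val_zero, Matrix.cons_val_one,
          Matrix.head_cons, Matrix.empty_val', Matrix.cons_val_fin_one, Matrix.head_fin_const,
          Matrix.cons_val_two, Matrix.cons_val_three, Matrix.tail_cons,
          Fin.zero_eta, Fin.mk_one, Fin.reduceFinMk] <;>
        field_simp <;>
        try ring1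
      · linear_combination -hkey
      · linear_combination hkey
  · rintro ⟨v, w, hind, hvv, hww, hvw, hM⟩
    rw [Sm_eq] at hM
    have ent : ∀ i j, (!![0, (x 3)*I + x 5, -(x 0)*I - x 1, (x 2)*I + x 4;
         -(x 3)*I - x 5, 0, (x 2)*I - x 4, (x 0)*I - x 1;
         (x 0)*I + x 1, -(x 2)*I + x 4, 0, -(x 3)*I + x 5;
         -(x 2)*I - x 4, -(x 0)*I + x 1, (x 3)*I - x 5, 0] : Matrix (Fin 4) (Fin 4) ℂ) i j
        = v i * w j - w i * v j := by
      intro i j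
      have h := congrFun (congrFun hM i) j
      simpa using h
    have e01 : ((x 3 : ℂ))*I + x 5 = v 0 * w 1 - w 0 * v 1 := by
      have h := ent 0 1; simp at h; linear_combination h
    have e02 : -((x 0 : ℂ))*I - x 1 = v 0 * w 2 - w 0 * v 2 := by
      have h := ent 0 2; simp at h; linear_combination h
    have e03 : ((x 2 : ℂ))*I + x 4 = v 0 * w 3 - w 0 * v 3 := by
      have h := ent 0 3; simp at h; linear_combination h
    have e12 : ((x 2 : ℂ))*I - x 4 = v 1 * w 2 - w 1 * v 2 := by
      have h := ent 1 2; simp at h; linear_combination h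
    have e13 : ((x 0 : ℂ))*I - x 1 = v 1 * w 3 - w 1 * v 3 := by
      have h := ent 1 3; simp at h; linear_combination h
    have e23 : -((x 3 : ℂ))*I + x 5 = v 2 * w 3 - w 2 * v 3 := by
      have h := ent 2 3; simp at h; linear_combination h
    constructor
    · intro hx
      rw [hx] at e01 e02 e03 e12 e13 e23
      simp only [Pi.zero_apply, Complex.ofReal_zero, zero_mul, neg_zero, zero_add, add_zero,
        zero_sub, sub_zero] at e01 e02 e03 e12 e13 e23
      have hm : ∀ i j, v i * w j = w i * v j := by
        intro i j
        fin_cases i <;> fin_cases j <;>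
          simp only [Fin.zero_eta, Fin.mk_one, Fin.reduceFinMk] <;>
          first
            | ring1
            | linear_combination e01 | linear_combination -e01
            | linear_combination e02 | linear_combination -e02
            | linear_combination e03 | linear_combination -e03
            | linear_combination e12 | linear_combination -e12
            | linear_combination e13 | linear_combination -e13
            | linear_combination e23 | linear_combination -e23
      rw [LinearIndependent.pair_iff] at hind
      rcases eq_or_ne v 0 with hv | hv
      · have := hind 1 0 (by simp [hv])
        simp at this
      · obtain ⟨i, hi⟩ : ∃ i, v i ≠ 0 := by
          by_contra h
          push_neg at h
          exact hv (funext h)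
        obtain ⟨-, h2⟩ := hind (w i) (-(v i)) (by
          funext j
          simp only [Pi.add_apply, Pi.smul_apply, smul_eq_mul, Pi.zero_apply]
          linear_combination -hm i j)
        exact hi (neg_eq_zero.mp h2)
    · have hPf : (((x 3 : ℂ))*I + x 5) * (-((x 3 : ℂ))*I + x 5)
          - (-((x 0 : ℂ))*I - x 1) * (((x 0 : ℂ))*I - x 1)
          + (((x 2 : ℂ))*I + x 4) * (((x 2 : ℂ))*I - x 4) = 0 := by
        rw [e01, e23, e02, e13, e03, e12]; ring
      have hc : ((Qform x : ℝ) : ℂ) = 0 := by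
        rw [Qform]; push_cast
        linear_combination -hPf + ((x 0:ℂ)^2 + (x 2:ℂ)^2 - (x 3:ℂ)^2) * Complex.I_sq
      exact_mod_cast hc
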